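/- Let C be a cone in R^d with apex at the origin and angular diameter at most θ, where 0 < θ < π/4, let p, q be distinct points with q ∈ C + p, and let r ∈ (C+p) \ {p} satisfy |pr| ≤ |pq|. Then |rq| ≤ |pq| − (cos θ − sin θ)·|pr|. -/

import Mathlib

open Real

/-- Length of a walk in a graph whose vertices lie in a metric space:
the sum of the metric distances of consecutive vertices. -/
noncomputable def wlen {V : Type*} [PseudoMetricSpace V] {G : SimpleGraph V} {u v : V}
    (w : G.Walk u v) : ℝ :=
  (w.darts.map fun d : G.Dart => dist d.toProd.1 d.toProd.2).sum

/-- Shortest-path distance between two vertices of a metrically weighted graph. -/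
noncomputable def gdist {V : Type*} [PseudoMetricSpace V] (G : SimpleGraph V) (p q : V) : ℝ :=
  sInf {l : ℝ | ∃ w : G.Walk p q, wlen w = l}

/-- The set `F` of edges, viewed as a graph, has maximum degree at most `f`. -/
def maxDegLe {V : Type*} (F : Set (Sym2 V)) (f : ℕ) : Prop :=
  ∀ v : V, {e | e ∈ F ∧ v ∈ e}.encard ≤ (f : ℕ∞)

set_option maxHeartbeats 1000000 in
theorem stmt11 {d : ℕ} (θ : ℝ) (hθ0 : 0 < θ) (hθ1 : θ < π / 4)
    (C : Set (EuclideanSpace ℝ (Fin d)))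
    -- C is a cone with apex at the origin
    (hcone : ∀ x ∈ C, ∀ t : ℝ, 0 ≤ t → t • x ∈ C)
    -- the angular diameter of C is at most θ
    (hang : ∀ x ∈ C, x ≠ 0 → ∀ y ∈ C, y ≠ 0 → InnerProductGeometry.angle x y ≤ θ)
    (p q : EuclideanSpace ℝ (Fin d)) (hpq : p ≠ q) (hq : q - p ∈ C)
    (r : EuclideanSpace ℝ (Fin d)) (hr : r - p ∈ C) (hrp : r ≠ p)
    (hrclose : dist p r ≤ dist p q) :
    dist r q ≤ dist p q - (Real.cos θ - Real.sin θ) * dist p r := by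
  set u := q - p with hu_def
  set v := r - p with hv_def
  have hu : u ≠ 0 := sub_ne_zero.mpr (Ne.symm hpq)
  have hv : v ≠ 0 := sub_ne_zero.mpr hrp
  have hdpq : dist p q = ‖u‖ := by rw [dist_comm, dist_eq_norm]
  have hdpr : dist p r = ‖v‖ := by rw [dist_comm, dist_eq_norm]
  have hdrq : dist r q = ‖u - v‖ := by
    rw [dist_comm, dist_eq_norm, hu_def, hv_def, sub_sub_sub_cancel_right]
  have hnu : (0:ℝ) < ‖u‖ := norm_pos_iff.mpr hu
  have hnv : (0:ℝ) < ‖v‖ := norm_pos_iff.mpr hv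
  have hαθ : InnerProductGeometry.angle u v ≤ θ := hang u hq hu v hr hv
  have hα0 : 0 ≤ InnerProductGeometry.angle u v := InnerProductGeometry.angle_nonneg u v
  have hθπ : θ ≤ π := by
    have := Real.pi_pos; linarith
  have hcos : Real.cos θ ≤ Real.cos (InnerProductGeometry.angle u v) :=
    Real.cos_le_cos_of_nonneg_of_le_pi hα0 hθπ hαθ
  have hinner : Real.cos (InnerProductGeometry.angle u v) * (‖u‖ * ‖v‖) = (inner ℝ u v : ℝ) :=
    InnerProductGeometry.cos_angle_mul_norm_mul_norm u v
  have hexp : ‖u - v‖ ^ 2 = ‖u‖ ^ 2 - 2 * (inner ℝ u v : ℝ) + ‖v‖ ^ 2 :=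
    norm_sub_sq_real u v
  have hsθ : 0 < Real.sin θ := Real.sin_pos_of_pos_of_lt_pi hθ0 (lt_of_lt_of_le hθ1 (by
    have := Real.pi_pos; linarith))
  have hcθ : 0 < Real.cos θ := Real.cos_pos_of_mem_Ioo ⟨by linarith [Real.pi_pos], by
    linarith [Real.pi_pos]⟩
  have hcθ1 : Real.cos θ ≤ 1 := Real.cos_le_one θ
  have hpyth : Real.sin θ ^ 2 + Real.cos θ ^ 2 = 1 := Real.sin_sq_add_cos_sq θ
  have hnvu : ‖v‖ ≤ ‖u‖ := by rwa [hdpr, hdpq] at hrclose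
  rw [hdrq, hdpq, hdpr]
  have hRHS : 0 ≤ ‖u‖ - (Real.cos θ - Real.sin θ) * ‖v‖ := by nlinarith
  have hsq : ‖u - v‖ ^ 2 ≤ (‖u‖ - (Real.cos θ - Real.sin θ) * ‖v‖) ^ 2 := by
    rw [hexp, ← hinner]
    have h1 : Real.sin θ * (‖u‖ * ‖v‖) ≤
        (Real.cos (InnerProductGeometry.angle u v) - (Real.cos θ - Real.sin θ)) * (‖u‖ * ‖v‖) :=
      mul_le_mul_of_nonneg_right (by linarith) (mul_pos hnu hnv).le
    have h2 : Real.cos θ * ‖v‖ ≤ ‖u‖ := by nlinarith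
    have h3 : (Real.sin θ * ‖v‖) * (Real.cos θ * ‖v‖) ≤ (Real.sin θ * ‖v‖) * ‖u‖ :=
      mul_le_mul_of_nonneg_left h2 (mul_pos hsθ hnv).le
    have h5 : (Real.cos θ - Real.sin θ) ^ 2 * ‖v‖ ^ 2
        = ‖v‖ ^ 2 - 2 * Real.sin θ * Real.cos θ * ‖v‖ ^ 2 := by
      have hc2 : (Real.cos θ - Real.sin θ) ^ 2 = 1 - 2 * Real.sin θ * Real.cos θ := by
        linear_combination hpyth
      rw [hc2]; ring
    nlinarith [h1, h3, h5]
  nlinarith [norm_nonneg (u - v)]
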